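/- Let 0 ≤ l < n and λ ∈ ℝ^n with λ_1 ≥ ... ≥ λ_n > 0. Then Σ_{i=1}^n f_i(λ) ≥ ((n-l)/n)·μ'(S_n/S_l)·S_{n-1}(λ)/S_l(λ), where μ(t) = t^{1/(n-l)}, f(λ) = μ(S_n(λ)/S_l(λ)), and f_i = ∂f/∂λ_i. -/

import Mathlib

open Finset

/-- `S m lam` : the `m`-th elementary symmetric function of the entries of `lam`,
with the conventions `S 0 = 1` and `S m = 0` for `m < 0` (and for `m > n`). -/
noncomputable def S {n : ℕ} (m : ℤ) (lam : Fin n → ℝ) : ℝ :=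
  if 0 ≤ m then
    ∑ A ∈ Finset.powersetCard m.toNat (Finset.univ : Finset (Fin n)), ∏ j ∈ A, lam j
  else 0

namespace Stmt19Aux
variable {n : ℕ}

noncomputable def E (s : Finset (Fin n)) (m : ℕ) (x : Fin n → ℝ) : ℝ :=
  ∑ A ∈ s.powersetCard m, ∏ j ∈ A, x j

lemma E_zero (s : Finset (Fin n)) (x : Fin n → ℝ) : E s 0 x = 1 := by
  simp [E]

lemma E_pos {s : Finset (Fin n)} {m : ℕ} (hm : m ≤ s.card) {x : Fin n → ℝ}
    (hx : ∀ i, 0 < x i) : 0 < E s m x := by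
  apply Finset.sum_pos
  · intro A hA
    exact Finset.prod_pos fun j _ => hx j
  · exact Finset.powersetCard_nonempty.2 hm

lemma E_nonneg (s : Finset (Fin n)) (m : ℕ) {x : Fin n → ℝ}
    (hx : ∀ i, 0 < x i) : 0 ≤ E s m x := by
  apply Finset.sum_nonneg
  intro A hA
  exact le_of_lt (Finset.prod_pos fun j _ => hx j)

lemma E_eq_zero {s : Finset (Fin n)} {m : ℕ} (hm : s.card < m) (x : Fin n → ℝ) :
    E s m x = 0 := by
  simp [E, Finset.powersetCard_eq_empty.2 hm]

lemma reindex (m : ℕ) (f : Finset (Fin n) → Fin n → ℝ) :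
    ∑ C ∈ (Finset.univ : Finset (Fin n)).powersetCard m, ∑ i ∈ Cᶜ, f C i
      = ∑ B ∈ (Finset.univ : Finset (Fin n)).powersetCard (m + 1), ∑ i ∈ B, f (B.erase i) i := by
  rw [Finset.sum_sigma', Finset.sum_sigma']
  refine Finset.sum_nbij' (fun p => ⟨insert p.2 p.1, p.2⟩) (fun p => ⟨p.1.erase p.2, p.2⟩)
    ?_ ?_ ?_ ?_ ?_
  · rintro ⟨C, i⟩ hp
    simp only [Finset.mem_sigma, Finset.mem_powersetCard_univ, Finset.mem_compl] at hp
    simp only [Finset.mem_sigma, Finset.mem_powersetCard_univ]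
    exact ⟨by rw [Finset.card_insert_of_notMem hp.2, hp.1], Finset.mem_insert_self _ _⟩
  · rintro ⟨B, i⟩ hp
    simp only [Finset.mem_sigma, Finset.mem_powersetCard_univ] at hp
    simp only [Finset.mem_sigma, Finset.mem_powersetCard_univ, Finset.mem_compl]
    exact ⟨by rw [Finset.card_erase_of_mem hp.2, hp.1]; rfl, Finset.notMem_erase _ _⟩
  · rintro ⟨C, i⟩ hp
    simp only [Finset.mem_sigma, Finset.mem_powersetCard_univ, Finset.mem_compl] at hp
    simp [Finset.erase_insert hp.2]
  · rintro ⟨B, i⟩ hp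
    simp only [Finset.mem_sigma, Finset.mem_powersetCard_univ] at hp
    simp [Finset.insert_erase hp.2]
  · rintro ⟨C, i⟩ hp
    simp only [Finset.mem_sigma, Finset.mem_powersetCard_univ, Finset.mem_compl] at hp
    simp [Finset.erase_insert hp.2]


lemma E_insert {i : Fin n} {s : Finset (Fin n)} (hi : i ∉ s) (m : ℕ) (x : Fin n → ℝ) :
    E (insert i s) (m + 1) x = E s (m + 1) x + x i * E s m x := by
  unfold E
  rw [Finset.powersetCard_succ_insert hi, Finset.sum_union, Finset.sum_image, Finset.mul_sum]
  · congr 1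
    refine Finset.sum_congr rfl fun A hA => ?_
    rw [Finset.mem_powersetCard] at hA
    rw [Finset.prod_insert (fun h => hi (hA.1 h))]
  · intro A hA B hB h
    rw [Finset.mem_coe, Finset.mem_powersetCard] at hA hB
    have : ∀ C : Finset (Fin n), C ⊆ s → (insert i C).erase i = C := fun C hC => by
      rw [Finset.erase_insert (fun h => hi (hC h))]
    rw [← this A hA.1, ← this B hB.1, h]
  · rw [Finset.disjoint_right]
    rintro A hA hA'
    rw [Finset.mem_image] at hA
    obtain ⟨B, hB, rfl⟩ := hA
    rw [Finset.mem_powersetCard] at hA'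
    exact hi (hA'.1 (Finset.mem_insert_self _ _))

lemma E_update {i : Fin n} {s : Finset (Fin n)} (hi : i ∉ s) (m : ℕ) (x : Fin n → ℝ) (t : ℝ) :
    E s m (Function.update x i t) = E s m x := by
  refine Finset.sum_congr rfl fun A hA => Finset.prod_congr rfl fun j hj => ?_
  rw [Finset.mem_powersetCard] at hA
  exact Function.update_of_ne (by rintro rfl; exact hi (hA.1 hj)) _ _

/-- `Sx m i x` : `m`-th elementary symmetric function of entries other than `i`. -/
noncomputable def Sx (m : ℤ) (i : Fin n) (x : Fin n → ℝ) : ℝ :=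
  if 0 ≤ m then E (Finset.univ.erase i) m.toNat x else 0

lemma S_update (i : Fin n) (t : ℝ) (m : ℤ) (x : Fin n → ℝ) :
    S m (Function.update x i t) = Sx m i x + t * Sx (m - 1) i x := by
  rcases lt_trichotomy m 0 with hm | hm | hm
  · rw [S, if_neg (by omega), Sx, if_neg (by omega), Sx, if_neg (by omega)]; ring
  · subst hm
    rw [S, if_pos le_rfl, Sx, if_pos le_rfl, Sx, if_neg (by omega)]
    simp [E]
  · have h1 : (0:ℤ) ≤ m := le_of_lt hm
    have h2 : (0:ℤ) ≤ m - 1 := by omega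
    rw [S, if_pos h1, Sx, if_pos h1, Sx, if_pos h2]
    have hmt : m.toNat = (m - 1).toNat + 1 := by omega
    have huniv : (Finset.univ : Finset (Fin n)) = insert i (Finset.univ.erase i) := by
      rw [Finset.insert_erase (Finset.mem_univ i)]
    calc E Finset.univ m.toNat (Function.update x i t)
        = E (insert i (Finset.univ.erase i)) ((m-1).toNat + 1) (Function.update x i t) := by
          rw [← huniv, ← hmt]
      _ = E (Finset.univ.erase i) ((m-1).toNat + 1) (Function.update x i t)
            + Function.update x i t i * E (Finset.univ.erase i) (m-1).toNat
              (Function.update x i t) := E_insert (Finset.notMem_erase _ _) _ _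
      _ = E (Finset.univ.erase i) m.toNat x + t * E (Finset.univ.erase i) (m-1).toNat x := by
          rw [E_update (Finset.notMem_erase _ _), E_update (Finset.notMem_erase _ _),
            Function.update_self, hmt]

lemma S_eq_Sx (i : Fin n) (m : ℤ) (x : Fin n → ℝ) :
    S m x = Sx m i x + x i * Sx (m - 1) i x := by
  conv_lhs => rw [← Function.update_eq_self i x, S_update]


lemma E_one (x : Fin n → ℝ) : E Finset.univ 1 x = ∑ i, x i := by
  rw [E, Finset.powersetCard_one, Finset.sum_map]
  simp

lemma sum_E_erase (m : ℕ) (hm : m ≤ n) (x : Fin n → ℝ) :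
    ∑ i, E (Finset.univ.erase i) m x = ((n : ℝ) - (m : ℝ)) * E Finset.univ m x := by
  have h1 : ∀ i : Fin n, E (Finset.univ.erase i) m x
      = ∑ A ∈ (Finset.univ : Finset (Fin n)).powersetCard m,
          if i ∈ A then 0 else ∏ j ∈ A, x j := by
    intro i
    rw [E, show (Finset.univ.erase i).powersetCard m
        = ((Finset.univ : Finset (Fin n)).powersetCard m).filter (fun A => i ∉ A) by
      ext A
      simp only [Finset.mem_powersetCard, Finset.mem_filter, Finset.subset_erase,
        Finset.subset_univ, true_and, Finset.mem_powersetCard_univ]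
      tauto]
    rw [Finset.sum_filter]
    exact Finset.sum_congr rfl fun A _ => by split <;> simp_all
  simp_rw [h1]
  rw [Finset.sum_comm, E, Finset.mul_sum]
  refine Finset.sum_congr rfl fun A hA => ?_
  rw [Finset.mem_powersetCard_univ] at hA
  have h2 : (Finset.univ : Finset (Fin n)).filter (fun i => i ∉ A) = Aᶜ := by
    ext i; simp
  rw [Finset.sum_ite, Finset.sum_const_zero, zero_add, Finset.sum_const, nsmul_eq_mul, h2,
    Finset.card_compl, Fintype.card_fin, hA, Nat.cast_sub hm]

lemma E_compl (m : ℕ) (hm : m ≤ n) (x : Fin n → ℝ) (hx : ∀ i, x i ≠ 0) :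
    E Finset.univ m x = (∏ j, x j) * E Finset.univ (n - m) (fun j => (x j)⁻¹) := by
  rw [E, E, Finset.mul_sum]
  refine Finset.sum_nbij' (fun A => Aᶜ) (fun C => Cᶜ) ?_ ?_ ?_ ?_ ?_
  · intro A hA
    rw [Finset.mem_powersetCard_univ] at hA ⊢
    rw [Finset.card_compl, Fintype.card_fin, hA]
  · intro C hC
    rw [Finset.mem_powersetCard_univ] at hC ⊢
    rw [Finset.card_compl, Fintype.card_fin, hC]
    omega
  · intro A _
    exact compl_compl A
  · intro C _
    exact compl_compl C
  · intro A hA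
    rw [Finset.mem_powersetCard_univ] at hA
    have hne : (∏ j ∈ Aᶜ, x j) ≠ 0 := Finset.prod_ne_zero_iff.2 fun j _ => hx j
    rw [Finset.prod_inv_distrib, ← Finset.prod_mul_prod_compl A x]
    field_simp


lemma key (x : Fin n → ℝ) (hx : ∀ i, 0 < x i) (m : ℕ) (hm1 : 1 ≤ m) (hmn : m + 1 ≤ n) :
    (n : ℝ) * ((m : ℝ) + 1) * E Finset.univ (m + 1) x
      ≤ ((n : ℝ) - (m : ℝ)) * ((∑ i, x i) * E Finset.univ m x) := by
  set U : ℝ := ∑ B ∈ (Finset.univ : Finset (Fin n)).powersetCard m,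
      ∑ i ∈ B, x i * ∏ j ∈ B, x j with hU_def
  set V : ℝ := ∑ B ∈ (Finset.univ : Finset (Fin n)).powersetCard m,
      ∑ i ∈ Bᶜ, x i * ∏ j ∈ B, x j with hV_def
  have hUV : U + V = (∑ i, x i) * E Finset.univ m x := by
    rw [hU_def, hV_def, ← Finset.sum_add_distrib, E, Finset.mul_sum]
    refine Finset.sum_congr rfl fun B hB => ?_
    rw [Finset.sum_add_sum_compl, ← Finset.sum_mul]
  have hV : V = ((m : ℝ) + 1) * E Finset.univ (m + 1) x := by
    rw [hV_def, reindex m (fun C i => x i * ∏ j ∈ C, x j), E, Finset.mul_sum]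
    refine Finset.sum_congr rfl fun A hA => ?_
    rw [Finset.mem_powersetCard_univ] at hA
    calc ∑ i ∈ A, x i * ∏ j ∈ A.erase i, x j
        = ∑ i ∈ A, ∏ j ∈ A, x j :=
          Finset.sum_congr rfl fun i hi => Finset.mul_prod_erase A x hi
      _ = ((m : ℝ) + 1) * ∏ j ∈ A, x j := by
          rw [Finset.sum_const, hA, nsmul_eq_mul]; push_cast; ring
  have hm' : m - 1 + 1 = m := Nat.succ_pred_eq_of_pos hm1
  have hU : U = ∑ C ∈ (Finset.univ : Finset (Fin n)).powersetCard (m - 1),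
      ∑ i ∈ Cᶜ, x i ^ 2 * ∏ j ∈ C, x j := by
    rw [reindex (m - 1) (fun C i => x i ^ 2 * ∏ j ∈ C, x j), hm', hU_def]
    refine Finset.sum_congr rfl fun B hB => Finset.sum_congr rfl fun i hi => ?_
    rw [← Finset.mul_prod_erase B x hi]
    ring
  set W : ℝ := ∑ C ∈ (Finset.univ : Finset (Fin n)).powersetCard (m - 1),
      (∑ i ∈ Cᶜ, x i) ^ 2 * ∏ j ∈ C, x j with hW_def
  have hcast : ((n - (m - 1) : ℕ) : ℝ) = (n : ℝ) - (m : ℝ) + 1 := by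
    have h1 : (1:ℕ) ≤ m := hm1
    have h2 : m ≤ n := by omega
    push_cast [Nat.cast_sub (by omega : m - 1 ≤ n), Nat.cast_sub h1]
    ring
  have hWle : W ≤ ((n : ℝ) - (m : ℝ) + 1) * U := by
    rw [hW_def, hU, Finset.mul_sum]
    refine Finset.sum_le_sum fun C hC => ?_
    rw [Finset.mem_powersetCard_univ] at hC
    have hcard : ((Cᶜ.card : ℕ) : ℝ) = (n : ℝ) - (m : ℝ) + 1 := by
      rw [Finset.card_compl, Fintype.card_fin, hC, hcast]
    have hcs : (∑ i ∈ Cᶜ, x i) ^ 2 ≤ ((n : ℝ) - (m : ℝ) + 1) * ∑ i ∈ Cᶜ, x i ^ 2 := by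
      have h := sq_sum_le_card_mul_sum_sq (s := Cᶜ) (f := x)
      rwa [hcard] at h
    calc (∑ i ∈ Cᶜ, x i) ^ 2 * ∏ j ∈ C, x j
        ≤ (((n : ℝ) - (m : ℝ) + 1) * ∑ i ∈ Cᶜ, x i ^ 2) * ∏ j ∈ C, x j :=
          mul_le_mul_of_nonneg_right hcs (Finset.prod_nonneg fun j _ => (hx j).le)
      _ = ((n : ℝ) - (m : ℝ) + 1) * ∑ i ∈ Cᶜ, x i ^ 2 * ∏ j ∈ C, x j := by
          rw [mul_assoc, Finset.sum_mul]
  have hW2 : W = ∑ C ∈ (Finset.univ : Finset (Fin n)).powersetCard (m - 1),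
      ∑ i ∈ Cᶜ, x i * ((∑ j ∈ Cᶜ, x j) * ∏ j ∈ C, x j) := by
    refine Finset.sum_congr rfl fun C _ => ?_
    rw [← Finset.sum_mul]
    ring
  have hWeq : W = U + (m : ℝ) * V := by
    rw [hW2, reindex (m - 1) (fun C i => x i * ((∑ j ∈ Cᶜ, x j) * ∏ j ∈ C, x j)), hm',
      hU_def, hV_def, Finset.mul_sum, ← Finset.sum_add_distrib]
    refine Finset.sum_congr rfl fun B hB => ?_
    rw [Finset.mem_powersetCard_univ] at hB
    have hstep : ∀ i ∈ B, x i * ((∑ j ∈ (B.erase i)ᶜ, x j) * ∏ j ∈ B.erase i, x j)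
        = x i * ∏ j ∈ B, x j + (∑ j ∈ Bᶜ, x j) * ∏ j ∈ B, x j := by
      intro i hi
      rw [Finset.compl_erase, Finset.sum_insert (by simp [hi] : i ∉ Bᶜ),
        ← Finset.mul_prod_erase B x hi]
      ring
    rw [Finset.sum_congr rfl hstep, Finset.sum_add_distrib]
    congr 1
    rw [Finset.sum_const, hB, nsmul_eq_mul, ← Finset.sum_mul]
  have hmV : (m : ℝ) * V ≤ ((n : ℝ) - (m : ℝ)) * U := by linarith [hWle, hWeq]
  calc (n : ℝ) * ((m : ℝ) + 1) * E Finset.univ (m + 1) x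
      = (n : ℝ) * V := by rw [hV]; ring
    _ ≤ ((n : ℝ) - (m : ℝ)) * (U + V) := by linarith [hmV]
    _ = ((n : ℝ) - (m : ℝ)) * ((∑ i, x i) * E Finset.univ m x) := by rw [hUV]


lemma S_eq_E (m : ℤ) (hm : 0 ≤ m) (x : Fin n → ℝ) :
    S m x = E Finset.univ m.toNat x := by
  rw [S, if_pos hm]; rfl

lemma main_ineq (hn : 2 ≤ n) (l : ℤ) (hl0 : 0 ≤ l) (hln : l < n) (lam : Fin n → ℝ)
    (hpos : ∀ i, 0 < lam i) :
    (n : ℝ) * ((n : ℝ) - (l : ℝ) + 1) * (S (n : ℤ) lam * S (l - 1) lam)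
      ≤ (l : ℝ) * (S ((n : ℤ) - 1) lam * S l lam) := by
  rcases eq_or_lt_of_le hl0 with h0 | h1
  · have hS : S (l - 1) lam = 0 := by
      rw [S, if_neg (by omega)]
    rw [hS, ← h0]
    simp
  · -- 1 ≤ l
    set lN := l.toNat with hlN_def
    have hlN1 : 1 ≤ lN := by omega
    have hlNn : lN ≤ n - 1 := by omega
    have hncast : ((lN : ℕ) : ℝ) = (l : ℝ) := by
      exact_mod_cast congrArg (Int.cast : ℤ → ℝ) (Int.toNat_of_nonneg hl0)
    have hne : ∀ j, lam j ≠ 0 := fun j => (hpos j).ne'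
    set mu : Fin n → ℝ := fun j => (lam j)⁻¹ with hmu_def
    have hmupos : ∀ j, 0 < mu j := fun j => inv_pos.2 (hpos j)
    have hP : 0 < ∏ j, lam j := Finset.prod_pos fun j _ => hpos j
    have e1 : S (n : ℤ) lam = (∏ j, lam j) := by
      rw [S_eq_E _ (by positivity), Int.toNat_natCast,
        E_compl n le_rfl lam hne, Nat.sub_self, E_zero, mul_one]
    have e2 : S ((n : ℤ) - 1) lam = (∏ j, lam j) * E Finset.univ 1 mu := by
      rw [S_eq_E _ (by omega), show ((n : ℤ) - 1).toNat = n - 1 by omega,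
        E_compl (n - 1) (by omega) lam hne, show n - (n - 1) = 1 by omega]
    have e3 : S l lam = (∏ j, lam j) * E Finset.univ (n - lN) mu := by
      rw [S_eq_E _ hl0, ← hlN_def, E_compl lN (by omega) lam hne]
    have e4 : S (l - 1) lam = (∏ j, lam j) * E Finset.univ (n - lN + 1) mu := by
      rw [S_eq_E _ (by omega), show (l - 1).toNat = lN - 1 by omega,
        E_compl (lN - 1) (by omega) lam hne, show n - (lN - 1) = n - lN + 1 by omega]
    have hkey := key mu hmupos (n - lN) (by omega) (by omega)
    rw [← E_one] at hkey
    have hc1 : ((n - lN : ℕ) : ℝ) = (n : ℝ) - (l : ℝ) := by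
      rw [Nat.cast_sub (by omega), hncast]
    rw [hc1] at hkey
    have hkey2 := mul_le_mul_of_nonneg_left hkey (mul_pos hP hP).le
    rw [e1, e2, e3, e4]
    nlinarith [hkey2]

end Stmt19Aux

open Stmt19Aux in
theorem stmt19 (n : ℕ) (hn : 2 ≤ n) (l : ℤ) (hl0 : 0 ≤ l) (hln : l < n)
    (lam : Fin n → ℝ) (hdec : ∀ i j : Fin n, i ≤ j → lam j ≤ lam i)
    (hpos : ∀ i, 0 < lam i) (d : Fin n → ℝ)
    (hd : ∀ i, HasDerivAt
      (fun t : ℝ =>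
        (S (n : ℤ) (Function.update lam i t) / S l (Function.update lam i t))
          ^ ((1 : ℝ) / ((n : ℝ) - (l : ℝ))))
      (d i) (lam i)) :
    (((n : ℝ) - (l : ℝ)) / (n : ℝ))
        * ((1 / ((n : ℝ) - (l : ℝ)))
            * (S (n : ℤ) lam / S l lam) ^ ((1 : ℝ) / ((n : ℝ) - (l : ℝ)) - 1))
        * (S ((n : ℤ) - 1) lam / S l lam)
      ≤ ∑ i, d i := by
  have hlr : (l : ℝ) ≤ (n : ℝ) - 1 := by
    have : l ≤ (n : ℤ) - 1 := by omega
    exact_mod_cast (by exact_mod_cast this : (l : ℝ) ≤ ((n : ℤ) - 1 : ℤ))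
  have hnl1 : (1 : ℝ) ≤ (n : ℝ) - (l : ℝ) := by
    have h0 : (0:ℝ) ≤ (l:ℝ) := by exact_mod_cast hl0
    linarith
  have hnpos : (0 : ℝ) < n := by positivity
  set α : ℝ := (1 : ℝ) / ((n : ℝ) - (l : ℝ)) with hα_def
  have hαpos : 0 < α := by
    rw [hα_def]; positivity
  -- positivity of the symmetric functions
  have hSl : 0 < S l lam := by
    rw [S_eq_E _ hl0]
    exact E_pos (by simp only [Finset.card_univ, Fintype.card_fin]; omega) hpos
  have hSn : 0 < S (n : ℤ) lam := by
    rw [S_eq_E _ (by positivity)]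
    exact E_pos (by simp [Finset.card_univ]) hpos
  have hSn1 : 0 < S ((n : ℤ) - 1) lam := by
    rw [S_eq_E _ (by omega)]
    exact E_pos (by simp only [Finset.card_univ, Fintype.card_fin]; omega) hpos
  have hSl1 : 0 ≤ S (l - 1) lam := by
    rcases le_or_gt 0 (l - 1) with h | h
    · rw [S_eq_E _ h]
      exact E_nonneg _ _ hpos
    · rw [S, if_neg (by omega)]
  set q : ℝ := S (n : ℤ) lam / S l lam with hq_def
  have hq : 0 < q := div_pos hSn hSl
  have hcq : 0 < q ^ (α - 1) := Real.rpow_pos_of_pos hq _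
  -- compute each derivative
  have hderiv : ∀ i, d i =
      ((Sx ((n : ℤ) - 1) i lam * S l lam - S (n : ℤ) lam * Sx (l - 1) i lam)
        / (S l lam) ^ 2) * (α * q ^ (α - 1)) := by
    intro i
    have hnumval : Sx (n : ℤ) i lam + lam i * Sx ((n : ℤ) - 1) i lam = S (n : ℤ) lam :=
      (S_eq_Sx i _ lam).symm
    have hdenval : Sx l i lam + lam i * Sx (l - 1) i lam = S l lam :=
      (S_eq_Sx i _ lam).symm
    have hnum : HasDerivAt
        (fun t : ℝ => Sx (n : ℤ) i lam + t * Sx ((n : ℤ) - 1) i lam)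
        (Sx ((n : ℤ) - 1) i lam) (lam i) := by
      simpa using ((hasDerivAt_id (lam i)).mul_const (Sx ((n : ℤ) - 1) i lam)).const_add
        (Sx (n : ℤ) i lam)
    have hden : HasDerivAt
        (fun t : ℝ => Sx l i lam + t * Sx (l - 1) i lam)
        (Sx (l - 1) i lam) (lam i) := by
      simpa using ((hasDerivAt_id (lam i)).mul_const (Sx (l - 1) i lam)).const_add
        (Sx l i lam)
    have hdenne : Sx l i lam + lam i * Sx (l - 1) i lam ≠ 0 := by
      rw [hdenval]; exact hSl.ne'
    have hdiv := hnum.div hden hdenne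
    have hqval : (Sx (n : ℤ) i lam + lam i * Sx ((n : ℤ) - 1) i lam)
        / (Sx l i lam + lam i * Sx (l - 1) i lam) = q := by
      rw [hnumval, hdenval, hq_def]
    have hrpow := hdiv.rpow_const (p := α) (Or.inl (by simp only [Pi.div_apply]; rw [hqval]; exact hq.ne'))
    have hfe : (fun t : ℝ =>
        (S (n : ℤ) (Function.update lam i t) / S l (Function.update lam i t)) ^ α)
        = (fun t : ℝ => ((Sx (n : ℤ) i lam + t * Sx ((n : ℤ) - 1) i lam)
            / (Sx l i lam + t * Sx (l - 1) i lam)) ^ α) := by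
      funext t
      rw [S_update, S_update]
    have hdi := (hd i).unique (by rw [hfe]; exact hrpow)
    rw [hdi]
    simp only [Pi.div_apply]
    rw [hqval, hnumval, hdenval]
    ring
  -- the sums of the partial symmetric functions
  have hsumP : ∑ i, Sx ((n : ℤ) - 1) i lam = S ((n : ℤ) - 1) lam := by
    have h1 : ∀ i : Fin n, Sx ((n : ℤ) - 1) i lam = E (Finset.univ.erase i) (n - 1) lam := by
      intro i
      rw [Sx, if_pos (by omega), show ((n : ℤ) - 1).toNat = n - 1 by omega]
    simp_rw [h1]
    rw [sum_E_erase (n - 1) (by omega) lam, S_eq_E _ (by omega),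
      show ((n : ℤ) - 1).toNat = n - 1 by omega]
    have : ((n : ℝ) - ((n - 1 : ℕ) : ℝ)) = 1 := by
      rw [Nat.cast_sub (by omega)]
      push_cast
      ring
    rw [this, one_mul]
  have hsumD : ∑ i, Sx (l - 1) i lam = ((n : ℝ) - (l : ℝ) + 1) * S (l - 1) lam := by
    rcases eq_or_lt_of_le hl0 with h0 | h1
    · have hz : ∀ i : Fin n, Sx (l - 1) i lam = 0 := by
        intro i
        rw [Sx, if_neg (by omega)]
      have hz2 : S (l - 1) lam = 0 := by
        rw [S, if_neg (by omega)]
      simp [hz, hz2]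
    · set lN := l.toNat with hlN_def
      have hncast : ((lN : ℕ) : ℝ) = (l : ℝ) := by
        exact_mod_cast congrArg (Int.cast : ℤ → ℝ) (Int.toNat_of_nonneg hl0)
      have h1 : ∀ i : Fin n, Sx (l - 1) i lam = E (Finset.univ.erase i) (lN - 1) lam := by
        intro i
        rw [Sx, if_pos (by omega), show (l - 1).toNat = lN - 1 by omega]
      simp_rw [h1]
      rw [sum_E_erase (lN - 1) (by omega) lam, S_eq_E _ (by omega),
        show (l - 1).toNat = lN - 1 by omega]
      have : ((n : ℝ) - ((lN - 1 : ℕ) : ℝ)) = (n : ℝ) - (l : ℝ) + 1 := by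
        rw [Nat.cast_sub (by omega), hncast]
        ring
      rw [this]
  -- sum the derivatives
  have hsum : ∑ i, d i =
      ((S ((n : ℤ) - 1) lam * S l lam
          - S (n : ℤ) lam * (((n : ℝ) - (l : ℝ) + 1) * S (l - 1) lam))
        / (S l lam) ^ 2) * (α * q ^ (α - 1)) := by
    simp_rw [hderiv]
    rw [← Finset.sum_mul, ← Finset.sum_div, Finset.sum_sub_distrib,
      ← Finset.sum_mul, ← Finset.mul_sum, hsumP, hsumD]
  rw [hsum]
  -- final algebraic comparison
  have hcore := main_ineq hn l hl0 hln lam hpos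
  have hcore2 := mul_le_mul_of_nonneg_right hcore hSl.le
  have h1 : (((n : ℝ) - (l : ℝ)) / (n : ℝ)) * (α * q ^ (α - 1))
        * (S ((n : ℤ) - 1) lam / S l lam)
      = (α * q ^ (α - 1)) * ((((n : ℝ) - (l : ℝ)) * S ((n : ℤ) - 1) lam)
          / ((n : ℝ) * S l lam)) := by
    field_simp
  have h2 : ((S ((n : ℤ) - 1) lam * S l lam
          - S (n : ℤ) lam * (((n : ℝ) - (l : ℝ) + 1) * S (l - 1) lam))
        / (S l lam) ^ 2) * (α * q ^ (α - 1))
      = (α * q ^ (α - 1)) * ((S ((n : ℤ) - 1) lam * S l lam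
          - S (n : ℤ) lam * (((n : ℝ) - (l : ℝ) + 1) * S (l - 1) lam))
        / (S l lam) ^ 2) := by
    ring
  rw [h1, h2]
  apply mul_le_mul_of_nonneg_left _ (by positivity)
  rw [div_le_div_iff₀ (by positivity) (by positivity)]
  nlinarith [hcore2, hSl, hSn1, hSn, hSl1, hnpos]
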